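/- Suppose b ∈ A(ri(dom(∑_{i=1}^s f_i))), where ri denotes the relative interior. If x = (x_1,…,x_s) is a solution of problem (P), then for any β > 0 and any α_i > 0 (i = 1,…,s) there exists y ∈ ℝ^m such that x_i = prox_{(α_i/β)f_i}(x_i − (α_i/β)A_iᵀ y) for every i ∈ {1,…,s} and y = prox_{β ι_C*}(y + β ∑_{i=1}^s A_i x_i). -/

import Mathlib

open Matrix Filter Topology

noncomputable section

/-- Spectral norm (largest singular value) of a real matrix. -/
def specNorm {p q : Type*} [Fintype p] [Fintype q] [DecidableEq q]
    (M : Matrix p q ℝ) : ℝ :=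
  ‖LinearMap.toContinuousLinearMap (Matrix.toEuclideanLin M)‖

/-- Condition-M for a triple of matrices: `M0 = M1 + M2`, `H := M0 + M2` is symmetric
positive definite, and `‖H^{-1/2} M2 H^{-1/2}‖₂ < 1/2` (here `H^{-1/2}` is the positive
semidefinite square root of `H⁻¹`). -/
def ConditionM {d : Type*} [Fintype d] [DecidableEq d] (M0 M1 M2 : Matrix d d ℝ) : Prop :=
  M0 = M1 + M2 ∧ ∃ hH : (M0 + M2).PosDef,
    specNorm (((hH.inv.posSemidef.1.eigenvectorUnitary : Matrix d d ℝ) *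
        diagonal (fun i => Real.sqrt (hH.inv.posSemidef.1.eigenvalues i)) *
        (star hH.inv.posSemidef.1.eigenvectorUnitary : Matrix d d ℝ)) * M2 *
      ((hH.inv.posSemidef.1.eigenvectorUnitary : Matrix d d ℝ) *
        diagonal (fun i => Real.sqrt (hH.inv.posSemidef.1.eigenvalues i)) *
        (star hH.inv.posSemidef.1.eigenvectorUnitary : Matrix d d ℝ))) < 1 / 2

/-- The cost functional defining the proximity operator `prox_{φ,H}` at input `x`. -/
def proxCost {ι : Type*} [Fintype ι] (φ : (ι → ℝ) → EReal) (H : Matrix ι ι ℝ)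
    (x u : ι → ℝ) : EReal :=
  ((((1 : ℝ) / 2) * ((u - x) ⬝ᵥ H.mulVec (u - x)) : ℝ) : EReal) + φ u

/-- `p = prox_{φ,H}(x)`: `p` is the unique minimizer of the prox cost. -/
def IsProx {ι : Type*} [Fintype ι] (φ : (ι → ℝ) → EReal) (H : Matrix ι ι ℝ)
    (x p : ι → ℝ) : Prop :=
  (∀ u, proxCost φ H x p ≤ proxCost φ H x u) ∧
  ∀ q, (∀ u, proxCost φ H x q ≤ proxCost φ H x u) → q = p

/-- Proper lower semicontinuous convex extended-real-valued function. -/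
def ProperConvexLsc {ι : Type*} [Fintype ι] (f : (ι → ℝ) → EReal) : Prop :=
  (∃ x, f x ≠ ⊤) ∧ (∀ x, f x ≠ ⊥) ∧ LowerSemicontinuous f ∧
  ∀ x y : ι → ℝ, ∀ t : ℝ, 0 < t → t < 1 →
    f (t • x + (1 - t) • y) ≤ (t : EReal) * f x + ((1 - t : ℝ) : EReal) * f y

/-- Scaling of an extended-real-valued function by a real constant. -/
def smulF {V : Type*} (c : ℝ) (φ : V → EReal) : V → EReal := fun u => (c : EReal) * φ u

/-- The conjugate of the indicator of `C = {b}`: `ι_C*(y) = ⟨y, b⟩`. -/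
def iotaCstar {m : ℕ} (b : Fin m → ℝ) : (Fin m → ℝ) → EReal :=
  fun y => ((y ⬝ᵥ b : ℝ) : EReal)

variable {s m : ℕ} {n : Fin s → ℕ}

/-- Index type for the concatenated variable `x = (x_1, …, x_s)`. -/
abbrev XIdx (n : Fin s → ℕ) := (i : Fin s) × Fin (n i)

/-- Index type for the full variable `v = (x, y)`. -/
abbrev FIdx (n : Fin s → ℕ) (m : ℕ) := XIdx n ⊕ Fin m

/-- The `i`-th block of a concatenated vector. -/
def blk (x : XIdx n → ℝ) (i : Fin s) : Fin (n i) → ℝ := fun j => x ⟨i, j⟩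

/-- The matrix `A = [A_1 … A_s]`. -/
def bigA (A : ∀ i : Fin s, Matrix (Fin m) (Fin (n i)) ℝ) : Matrix (Fin m) (XIdx n) ℝ :=
  Matrix.of fun r p => A p.1 r p.2

/-- The separable objective `∑ f_i(x_i)`. -/
def objSum (f : ∀ i : Fin s, (Fin (n i) → ℝ) → EReal) (x : XIdx n → ℝ) : EReal :=
  ∑ i, f i (blk x i)

/-- `∑ A_i x_i`. -/
def sumAx (A : ∀ i : Fin s, Matrix (Fin m) (Fin (n i)) ℝ) (x : XIdx n → ℝ) : Fin m → ℝ :=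
  ∑ i, (A i).mulVec (blk x i)

/-- `x` is a solution of problem (P). -/
def IsSolution (f : ∀ i : Fin s, (Fin (n i) → ℝ) → EReal)
    (A : ∀ i : Fin s, Matrix (Fin m) (Fin (n i)) ℝ) (b : Fin m → ℝ)
    (x : XIdx n → ℝ) : Prop :=
  sumAx A x = b ∧ ∀ z : XIdx n → ℝ, sumAx A z = b → objSum f x ≤ objSum f z

/-- `b ∈ A(ri(dom(∑ f_i)))` where `ri` is the relative (intrinsic) interior. -/
def RiCond (f : ∀ i : Fin s, (Fin (n i) → ℝ) → EReal)
    (A : ∀ i : Fin s, Matrix (Fin m) (Fin (n i)) ℝ) (b : Fin m → ℝ) : Prop :=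
  b ∈ (fun x => sumAx A x) '' intrinsicInterior ℝ {x : XIdx n → ℝ | objSum f x ≠ ⊤}

/-- The `x`-part of a full vector. -/
def xpart (v : FIdx n m → ℝ) : XIdx n → ℝ := fun p => v (Sum.inl p)

/-- The `y`-part of a full vector. -/
def ypart (v : FIdx n m → ℝ) : Fin m → ℝ := fun r => v (Sum.inr r)

/-- The function `Φ(x_1,…,x_s,y) = ∑ f_i(x_i) + ι_C*(y)`. -/
def PhiFun (f : ∀ i : Fin s, (Fin (n i) → ℝ) → EReal) (b : Fin m → ℝ)
    (v : FIdx n m → ℝ) : EReal :=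
  objSum f (xpart v) + iotaCstar b (ypart v)

/-- The diagonal matrix `R = diag((β/α_1)I, …, (β/α_s)I, (1/β)I)`. -/
def Rmat (α : Fin s → ℝ) (β : ℝ) : Matrix (FIdx n m) (FIdx n m) ℝ :=
  Matrix.diagonal (Sum.elim (fun p : XIdx n => β / α p.1) fun _ => 1 / β)

/-- The inverse `R⁻¹` of the diagonal matrix `R`. -/
def Rinv (α : Fin s → ℝ) (β : ℝ) : Matrix (FIdx n m) (FIdx n m) ℝ :=
  Matrix.diagonal (Sum.elim (fun p : XIdx n => α p.1 / β) fun _ => β)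

/-- The expansive matrix `E = [[I, −P⁻¹Aᵀ],[βA, I]]`. -/
def Emat (A : ∀ i : Fin s, Matrix (Fin m) (Fin (n i)) ℝ) (α : Fin s → ℝ) (β : ℝ) :
    Matrix (FIdx n m) (FIdx n m) ℝ :=
  Matrix.fromBlocks 1 (-(Matrix.diagonal (fun p : XIdx n => α p.1 / β) * (bigA A)ᵀ))
    (β • bigA A) 1

/-- The skew-symmetric matrix `S_A = [[0, −Aᵀ],[A, 0]]`. -/
def SAmat (A : ∀ i : Fin s, Matrix (Fin m) (Fin (n i)) ℝ) :
    Matrix (FIdx n m) (FIdx n m) ℝ :=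
  Matrix.fromBlocks 0 (-(bigA A)ᵀ) (bigA A) 0

/-- `w = 𝒯(v)`, where `𝒯(x_1,…,x_s,y) = (prox_{(α_1/β)f_1}x_1, …, prox_{(α_s/β)f_s}x_s,
prox_{β ι_C*}y)`. -/
def isT (f : ∀ i : Fin s, (Fin (n i) → ℝ) → EReal) (b : Fin m → ℝ)
    (α : Fin s → ℝ) (β : ℝ) (v w : FIdx n m → ℝ) : Prop :=
  (∀ i, IsProx (smulF (α i / β) (f i)) 1 (blk (xpart v) i) (blk (xpart w) i)) ∧
  IsProx (smulF β (iotaCstar b)) 1 (ypart v) (ypart w)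

/-- `w = T_ℳ(u₁, u₂)`, i.e. `w = 𝒯((E − R⁻¹M₀)w + R⁻¹M₁u₁ + R⁻¹M₂u₂)`. -/
def isTM (f : ∀ i : Fin s, (Fin (n i) → ℝ) → EReal)
    (A : ∀ i : Fin s, Matrix (Fin m) (Fin (n i)) ℝ) (b : Fin m → ℝ)
    (α : Fin s → ℝ) (β : ℝ) (M0 M1 M2 : Matrix (FIdx n m) (FIdx n m) ℝ)
    (u1 u2 w : FIdx n m → ℝ) : Prop :=
  isT f b α β ((Emat A α β - Rinv α β * M0).mulVec w + (Rinv α β * M1).mulVec u1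
    + (Rinv α β * M2).mulVec u2) w

/-- `T_ℳ` is well-defined. -/
def TMWellDefined (f : ∀ i : Fin s, (Fin (n i) → ℝ) → EReal)
    (A : ∀ i : Fin s, Matrix (Fin m) (Fin (n i)) ℝ) (b : Fin m → ℝ)
    (α : Fin s → ℝ) (β : ℝ) (M0 M1 M2 : Matrix (FIdx n m) (FIdx n m) ℝ) : Prop :=
  ∀ u1 u2 : FIdx n m → ℝ, ∃! w, isTM f A b α β M0 M1 M2 u1 u2 w


/-! ### Auxiliary lemmas -/

section AuxSep

open Set

/-- Proper separation of the origin from a convex set not containing it. -/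
lemma proper_sep {E : Type*} [NormedAddCommGroup E] [NormedSpace ℝ E] [FiniteDimensional ℝ E]
    (K : Set E) (hK : Convex ℝ K) (hne : K.Nonempty) (h0 : (0:E) ∉ K) :
    ∃ f : E →L[ℝ] ℝ, (∀ k ∈ K, 0 ≤ f k) ∧ ∃ k ∈ K, 0 < f k := by
  classical
  set V : Submodule ℝ E := Submodule.span ℝ K with hV
  have hKV : K ⊆ (V : Set E) := Submodule.subset_span
  set K' : Set V := ((↑) ⁻¹' K : Set V) with hK'
  have hK'conv : Convex ℝ K' := hK.linear_preimage V.subtype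
  obtain ⟨k₀, hk₀⟩ := hne
  have hk₀' : (⟨k₀, hKV hk₀⟩ : V) ∈ K' := hk₀
  have h0' : (0 : V) ∉ K' := by simpa [hK'] using h0
  have hspan : Submodule.span ℝ K' = ⊤ := by
    rw [show (K' : Set V) = ⇑V.subtype ⁻¹' K from rfl,
      Submodule.span_preimage_eq ⟨k₀, hk₀⟩ (by rw [Submodule.range_subtype]; exact hKV),
      ← hV, Submodule.comap_subtype_self]
  have main : ∃ f : V →L[ℝ] ℝ, (∀ k ∈ K', 0 ≤ f k) ∧ ∃ k ∈ K', 0 < f k := by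
    by_cases hsp : (0 : V) ∈ affineSpan ℝ K'
    · have htop : affineSpan ℝ K' = ⊤ := by
        rw [← AffineSubspace.direction_eq_top_iff_of_nonempty
          ((affineSpan_nonempty ℝ).2 ⟨_, hk₀'⟩)]
        rw [eq_top_iff, ← hspan, Submodule.span_le]
        intro k hk
        have := AffineSubspace.vsub_mem_direction (subset_affineSpan ℝ K' hk) hsp
        simpa using this
      have hint : (interior K').Nonempty :=
        (hK'conv.interior_nonempty_iff_affineSpan_eq_top).2 htop
      obtain ⟨f, u, hfu, hu0⟩ := geometric_hahn_banach_open (hK'conv.interior)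
        isOpen_interior (convex_singleton (0:V))
        (disjoint_singleton_right.2 fun h => h0' (interior_subset h))
      have hu0' : u ≤ 0 := by simpa using hu0 0 rfl
      obtain ⟨z, hz⟩ := hint
      refine ⟨-f, ?_, ⟨z, interior_subset hz, ?_⟩⟩
      · intro k hk
        have hfk : f k ≤ u := by
          by_contra hgt
          push_neg at hgt
          have hfz : f z < u := hfu z hz
          set d : ℝ := f k - u with hd
          have hd0 : 0 < d := by simp [hd]; linarith
          set t : ℝ := d / (2 * (f k - f z)) with ht
          have hkz : 0 < f k - f z := by linarith
          have ht0 : 0 < t := by positivity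
          have ht1 : t ≤ 1/2 := by
            rw [ht, div_le_iff₀ (by linarith)]
            nlinarith
          have hmem : t • z + (1-t) • k ∈ interior K' :=
            hK'conv.combo_interior_closure_mem_interior hz (subset_closure hk)
              ht0 (by linarith) (by ring)
          have := hfu _ hmem
          rw [map_add, _root_.map_smul, _root_.map_smul] at this
          simp only [smul_eq_mul] at this
          have htd : t * f k - t * f z = d / 2 := by
            rw [ht]; field_simp
          linarith
        simp only [ContinuousLinearMap.neg_apply]
        linarith
      · have := hfu z hz
        simp only [ContinuousLinearMap.neg_apply]
        linarith
    · have hcl : IsClosed ((affineSpan ℝ K' : AffineSubspace ℝ V) : Set V) :=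
        (affineSpan ℝ K').closed_of_finiteDimensional
      obtain ⟨f, u, h0u, hu⟩ := geometric_hahn_banach_point_closed
        (affineSpan ℝ K').convex hcl hsp
      rw [map_zero] at h0u
      refine ⟨f, fun k hk => ?_, ⟨_, hk₀', ?_⟩⟩
      · have := hu k (subset_affineSpan ℝ K' hk)
        linarith
      · have := hu _ (subset_affineSpan ℝ K' hk₀')
        linarith
  obtain ⟨f', hf1, k1, hk1, hk1'⟩ := main
  obtain ⟨g, hg, -⟩ := exists_extension_norm_eq V f'
  refine ⟨g, fun k hk => ?_, ⟨k1, hk1, ?_⟩⟩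
  · have := hg ⟨k, hKV hk⟩
    rw [this]
    exact hf1 _ hk
  · have := hg k1
    rw [this]
    exact hk1'

/-- One can move slightly past a point of the intrinsic interior within the set. -/
lemma ri_extend {E : Type*} [NormedAddCommGroup E] [NormedSpace ℝ E]
    (D : Set E) (x₀ u : E) (hx₀ : x₀ ∈ intrinsicInterior ℝ D) (hu : u ∈ D) :
    ∃ ε : ℝ, 0 < ε ∧ x₀ + ε • (x₀ - u) ∈ D := by
  obtain ⟨z, hz, hzx⟩ := hx₀
  have huS : u ∈ affineSpan ℝ D := subset_affineSpan ℝ D hu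
  haveI : Nonempty (affineSpan ℝ D) := ⟨⟨u, huS⟩⟩
  set uu : affineSpan ℝ D := ⟨u, huS⟩ with huu
  have hcont : Continuous fun t : ℝ => (t • (z -ᵥ uu) : (affineSpan ℝ D).direction) +ᵥ z := by
    fun_prop
  have h0 : ((0:ℝ) • (z -ᵥ uu) : (affineSpan ℝ D).direction) +ᵥ z = z := by simp
  have hev : ∀ᶠ t in nhds (0:ℝ),
      ((t • (z -ᵥ uu) : (affineSpan ℝ D).direction) +ᵥ z)
        ∈ interior ((↑) ⁻¹' D : Set (affineSpan ℝ D)) := by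
    have := hcont.continuousAt (x := (0:ℝ))
    apply this.eventually_mem
    rw [h0]
    exact isOpen_interior.mem_nhds hz
  have hev' : ∀ᶠ t in nhdsWithin (0:ℝ) (Set.Ioi 0),
      ((t • (z -ᵥ uu) : (affineSpan ℝ D).direction) +ᵥ z)
        ∈ interior ((↑) ⁻¹' D : Set (affineSpan ℝ D)) :=
    eventually_nhdsWithin_of_eventually_nhds hev
  obtain ⟨ε, hmem, hε⟩ := (hev'.and (eventually_mem_nhdsWithin)).exists
  refine ⟨ε, hε, ?_⟩
  have hDm := interior_subset hmem
  simp only [Set.mem_preimage] at hDm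
  have hco : (((ε • (z -ᵥ uu) : (affineSpan ℝ D).direction) +ᵥ z : affineSpan ℝ D) : E)
      = x₀ + ε • (x₀ - u) := by
    push_cast
    rw [← hzx]
    simp [huu]
    module
  rwa [hco] at hDm

lemma ereal_coe_sum {ι : Type*} (s : Finset ι) (r : ι → ℝ) :
    ((∑ i ∈ s, r i : ℝ) : EReal) = ∑ i ∈ s, ((r i : ℝ) : EReal) := by
  induction s using Finset.cons_induction with
  | empty => simp
  | cons a s ha ih => rw [Finset.sum_cons, Finset.sum_cons, EReal.coe_add, ih]

lemma ereal_sum_ne_bot {ι : Type*} (s : Finset ι) (g : ι → EReal)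
    (h : ∀ i ∈ s, g i ≠ ⊥) : ∑ i ∈ s, g i ≠ ⊥ := by
  induction s using Finset.cons_induction with
  | empty => simp
  | cons a s ha ih =>
    rw [Finset.sum_cons, Ne, EReal.add_eq_bot_iff]
    push_neg
    exact ⟨h a (Finset.mem_cons_self a s), ih fun i hi => h i (Finset.mem_cons.2 (Or.inr hi))⟩

lemma ereal_sum_ne_top {ι : Type*} [DecidableEq ι] (s : Finset ι) (g : ι → EReal)
    (hb : ∀ i ∈ s, g i ≠ ⊥) (ht : ∑ i ∈ s, g i ≠ ⊤) : ∀ i ∈ s, g i ≠ ⊤ := by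
  intro i hi hgi
  apply ht
  rw [← Finset.add_sum_erase s g hi, hgi, add_comm]
  exact EReal.add_top_of_ne_bot (ereal_sum_ne_bot _ _ fun j hj => hb j (Finset.mem_of_mem_erase hj))

lemma ereal_sum_eq_coe {ι : Type*} (s : Finset ι) (g : ι → EReal)
    (hb : ∀ i ∈ s, g i ≠ ⊥) (ht : ∀ i ∈ s, g i ≠ ⊤) :
    ∑ i ∈ s, g i = ((∑ i ∈ s, (g i).toReal : ℝ) : EReal) := by
  rw [ereal_coe_sum]
  exact Finset.sum_congr rfl fun i hi => (EReal.coe_toReal (ht i hi) (hb i hi)).symm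

lemma dot_self_nonneg {ι : Type*} [Fintype ι] (v : ι → ℝ) : 0 ≤ dotProduct v v :=
  Finset.sum_nonneg fun _ _ => mul_self_nonneg _

end AuxSep

lemma isProx_of_subgrad {ι : Type*} [Fintype ι] [DecidableEq ι]
    (fi : (ι → ℝ) → EReal) (t : ℝ) (ht : 0 < t)
    (xi w : ι → ℝ) (Fi : ℝ) (hxi : fi xi = (Fi : EReal))
    (hsub : ∀ v, ((Fi - (w ⬝ᵥ (v - xi)) : ℝ) : EReal) ≤ fi v) :
    IsProx (smulF t fi) 1 (xi - t • w) xi := by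
  set c : ι → ℝ := xi - t • w with hc
  have hcost : ∀ u, proxCost (smulF t fi) 1 c u
      = ((((1:ℝ)/2) * ((u - c) ⬝ᵥ (u - c)) : ℝ) : EReal) + (t : EReal) * fi u := by
    intro u; simp [proxCost, smulF, Matrix.one_mulVec]
  have hcx : proxCost (smulF t fi) 1 c xi
      = ((((1:ℝ)/2) * ((t • w) ⬝ᵥ (t • w)) + t * Fi : ℝ) : EReal) := by
    rw [hcost, hxi, ← EReal.coe_mul, ← EReal.coe_add]
    norm_num [hc]
  have hlow : ∀ u, proxCost (smulF t fi) 1 c xi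
      + ((((1:ℝ)/2) * ((u - xi) ⬝ᵥ (u - xi)) : ℝ) : EReal) ≤ proxCost (smulF t fi) 1 c u := by
    intro u
    rcases eq_or_ne (fi u) ⊤ with htop | hne
    · rw [hcost u, htop, EReal.mul_top_of_pos (by exact_mod_cast ht), add_comm,
        EReal.add_top_of_ne_bot (EReal.coe_ne_bot _)]
      exact le_top
    · have hbot : fi u ≠ ⊥ := by
        intro hb; have := hsub u; rw [hb] at this; exact (EReal.coe_ne_bot _) (le_bot_iff.1 this)
      have hrep : fi u = ((fi u).toReal : EReal) := (EReal.coe_toReal hne hbot).symm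
      rw [hcost u, hcx, hrep, ← EReal.coe_mul, ← EReal.coe_add, ← EReal.coe_add,
        EReal.coe_le_coe_iff]
      have hs : Fi - (w ⬝ᵥ (u - xi)) ≤ (fi u).toReal := by
        have := hsub u; rw [hrep] at this; exact_mod_cast this
      have hexp : (u - c) ⬝ᵥ (u - c)
          = (u - xi) ⬝ᵥ (u - xi) + 2 * (t * ((u - xi) ⬝ᵥ w)) + (t • w) ⬝ᵥ (t • w) := by
        have h' : u - c = (u - xi) + t • w := by rw [hc]; abel
        rw [h']
        simp only [add_dotProduct, dotProduct_add, dotProduct_smul,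
          smul_dotProduct, smul_eq_mul, dotProduct_comm w (u - xi)]
        ring
      have hwc : w ⬝ᵥ (u - xi) = (u - xi) ⬝ᵥ w := dotProduct_comm _ _
      nlinarith [mul_le_mul_of_nonneg_left hs ht.le]
  constructor
  · intro u
    calc proxCost (smulF t fi) 1 c xi
        ≤ proxCost (smulF t fi) 1 c xi + ((((1:ℝ)/2) * ((u - xi) ⬝ᵥ (u - xi)) : ℝ) : EReal) :=
          le_add_of_nonneg_right (by
            exact_mod_cast mul_nonneg (by norm_num) (dot_self_nonneg (u - xi)))
      _ ≤ proxCost (smulF t fi) 1 c u := hlow u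
  · intro q hq
    have h1 := hq xi
    have h2 := hlow q
    rw [hcx] at h1 h2
    rw [← EReal.coe_add] at h2
    have hd := le_trans h2 h1
    rw [EReal.coe_le_coe_iff] at hd
    have hle : ((1:ℝ)/2) * ((q - xi) ⬝ᵥ (q - xi)) ≤ 0 := by linarith
    have hz : (q - xi) ⬝ᵥ (q - xi) = 0 := le_antisymm (by linarith) (dot_self_nonneg _)
    have := dotProduct_self_eq_zero.1 hz
    exact sub_eq_zero.1 this

/-- Existence of a Lagrange multiplier under the relative interior condition. -/
lemma exists_multiplier {s m : ℕ} {n : Fin s → ℕ}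
    (f : ∀ i : Fin s, (Fin (n i) → ℝ) → EReal)
    (A : ∀ i : Fin s, Matrix (Fin m) (Fin (n i)) ℝ) (b : Fin m → ℝ)
    (hf : ∀ i, ProperConvexLsc (f i))
    (hb : RiCond f A b)
    (x : XIdx n → ℝ) (hx : IsSolution f A b x) :
    ∃ y : Fin m → ℝ, (∀ i, f i (blk x i) ≠ ⊤) ∧ ∀ i (v : Fin (n i) → ℝ),
      (((f i (blk x i)).toReal - (((A i)ᵀ.mulVec y) ⬝ᵥ (v - blk x i)) : ℝ) : EReal) ≤ f i v := by
  classical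
  obtain ⟨hAx, hopt⟩ := hx
  obtain ⟨x₀, hx₀ri, hAx₀⟩ := hb
  have hAx₀ : sumAx A x₀ = b := hAx₀
  set D : Set (XIdx n → ℝ) := {z | objSum f z ≠ ⊤} with hD
  have hx₀D : x₀ ∈ D := intrinsicInterior_subset hx₀ri
  have hfb : ∀ (u : XIdx n → ℝ) i, f i (blk u i) ≠ ⊥ := fun u i => (hf i).2.1 _
  have hxD : x ∈ D := by
    simp only [hD, Set.mem_setOf_eq] at hx₀D ⊢
    intro htop
    exact hx₀D (top_le_iff.1 (htop ▸ hopt x₀ hAx₀))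
  have hblkt : ∀ u ∈ D, ∀ i, f i (blk u i) ≠ ⊤ := by
    intro u hu i
    have hu' : ∑ i, f i (blk u i) ≠ ⊤ := hu
    exact ereal_sum_ne_top Finset.univ _ (fun j _ => hfb u j) hu' i (Finset.mem_univ i)
  set g : (XIdx n → ℝ) → ℝ := fun u => ∑ i, (f i (blk u i)).toReal with hg
  have hgrep : ∀ u ∈ D, objSum f u = ((g u : ℝ) : EReal) := by
    intro u hu
    exact ereal_sum_eq_coe Finset.univ _ (fun i _ => hfb u i) (fun i _ => hblkt u hu i)
  have hblk_comb : ∀ (a c : ℝ) (u v : XIdx n → ℝ) (i : Fin s),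
      blk (a • u + c • v) i = a • blk u i + c • blk v i := by
    intro a c u v i; funext j; simp [blk]
  have hsum_comb : ∀ (a c : ℝ) (u v : XIdx n → ℝ),
      sumAx A (a • u + c • v) = a • sumAx A u + c • sumAx A v := by
    intro a c u v
    unfold sumAx
    rw [Finset.smul_sum, Finset.smul_sum, ← Finset.sum_add_distrib]
    refine Finset.sum_congr rfl fun i _ => ?_
    rw [hblk_comb, Matrix.mulVec_add, Matrix.mulVec_smul, Matrix.mulVec_smul]
  have hcomb : ∀ u₁ ∈ D, ∀ u₂ ∈ D, ∀ a : ℝ, 0 < a → a < 1 →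
      (a • u₁ + (1-a) • u₂) ∈ D ∧ g (a • u₁ + (1-a) • u₂) ≤ a * g u₁ + (1-a) * g u₂ := by
    intro u₁ h₁ u₂ h₂ a ha ha1
    have hterm : ∀ i, f i (blk (a • u₁ + (1-a) • u₂) i)
        ≤ ((a * (f i (blk u₁ i)).toReal + (1-a) * (f i (blk u₂ i)).toReal : ℝ) : EReal) := by
      intro i
      have h := (hf i).2.2.2 (blk u₁ i) (blk u₂ i) a ha ha1
      have e₁ := EReal.coe_toReal (hblkt u₁ h₁ i) (hfb u₁ i)
      have e₂ := EReal.coe_toReal (hblkt u₂ h₂ i) (hfb u₂ i)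
      rw [hblk_comb]
      refine le_trans h (le_of_eq ?_)
      rw [EReal.coe_add, EReal.coe_mul, EReal.coe_mul, e₁, e₂]
    have hsumle : objSum f (a • u₁ + (1-a) • u₂)
        ≤ ((∑ i, (a * (f i (blk u₁ i)).toReal + (1-a) * (f i (blk u₂ i)).toReal) : ℝ) : EReal) := by
      rw [ereal_coe_sum]
      exact Finset.sum_le_sum fun i _ => hterm i
    have hmem : (a • u₁ + (1-a) • u₂) ∈ D := by
      simp only [hD, Set.mem_setOf_eq]
      intro htop
      rw [htop] at hsumle
      exact (EReal.coe_lt_top _).not_ge hsumle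
    refine ⟨hmem, ?_⟩
    rw [hgrep _ hmem, EReal.coe_le_coe_iff] at hsumle
    refine le_trans hsumle (le_of_eq ?_)
    rw [Finset.sum_add_distrib, ← Finset.mul_sum, ← Finset.mul_sum]
  set K : Set ((Fin m → ℝ) × ℝ) :=
    {p | ∃ u ∈ D, ∃ r : ℝ, 0 < r ∧ p = (sumAx A u - b, g u - g x + r)} with hK
  have hKne : K.Nonempty := ⟨(sumAx A x - b, g x - g x + 1), x, hxD, 1, one_pos, rfl⟩
  have hK0 : (0 : (Fin m → ℝ) × ℝ) ∉ K := by
    rintro ⟨u, hu, r, hr, heq⟩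
    have h1 := congrArg Prod.fst heq
    have h2 := congrArg Prod.snd heq
    simp only [Prod.fst_zero, Prod.snd_zero] at h1 h2
    have hfeas : sumAx A u = b := by
      have := h1.symm
      rwa [sub_eq_zero] at this
    have hle := hopt u hfeas
    rw [hgrep x hxD, hgrep u hu, EReal.coe_le_coe_iff] at hle
    have : g u - g x + r = 0 := h2.symm
    linarith
  have hKconv : Convex ℝ K := by
    rintro p₁ ⟨u₁, h₁, r₁, hr₁, rfl⟩ p₂ ⟨u₂, h₂, r₂, hr₂, rfl⟩ a c ha hc hac
    rcases eq_or_lt_of_le ha with rfl | ha'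
    · have hc1 : c = 1 := by linarith
      subst hc1
      simp only [zero_smul, zero_add, one_smul]
      exact ⟨u₂, h₂, r₂, hr₂, rfl⟩
    rcases eq_or_lt_of_le hc with rfl | hc'
    · have ha1 : a = 1 := by linarith
      subst ha1
      simp only [zero_smul, add_zero, one_smul]
      exact ⟨u₁, h₁, r₁, hr₁, rfl⟩
    have hc1 : c = 1 - a := by linarith
    subst hc1
    have ha1 : a < 1 := by linarith
    obtain ⟨hmem, hgle⟩ := hcomb u₁ h₁ u₂ h₂ a ha' ha1
    refine ⟨a • u₁ + (1-a) • u₂, hmem,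
      a * r₁ + (1-a) * r₂ + (a * g u₁ + (1-a) * g u₂ - g (a • u₁ + (1-a) • u₂)), ?_, ?_⟩
    · have h0 : 0 < a * r₁ + (1-a) * r₂ := by positivity
      linarith
    · rw [Prod.smul_mk, Prod.smul_mk, Prod.mk_add_mk, Prod.mk.injEq]
      constructor
      · rw [hsum_comb]
        module
      · simp only [smul_eq_mul]
        ring
  obtain ⟨φ, hφ1, kk, hkk, hkkpos⟩ := proper_sep K hKconv hKne hK0
  set γ : ℝ := φ ((0 : Fin m → ℝ), (1:ℝ)) with hγ
  set y₀ : Fin m → ℝ := fun j => φ (Pi.single j 1, 0) with hy₀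
  have hdec : ∀ (z : Fin m → ℝ) (t : ℝ), φ (z, t) = y₀ ⬝ᵥ z + γ * t := by
    intro z t
    have hsplit : (z, t) = (∑ j : Fin m, z j • ((Pi.single j 1 : Fin m → ℝ), (0:ℝ)))
        + t • ((0 : Fin m → ℝ), (1:ℝ)) := by
      rw [Prod.ext_iff]
      constructor
      · simp only [Prod.fst_add, Prod.fst_sum, Prod.smul_mk, Prod.snd_add, smul_zero]
        funext k
        simp [Finset.sum_apply, Pi.single_apply, mul_ite]
      · simp only [Prod.snd_add, Prod.snd_sum, Prod.smul_mk]
        simp [smul_eq_mul]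
    rw [hsplit, map_add, map_sum, _root_.map_smul]
    simp only [_root_.map_smul, smul_eq_mul]
    rw [dotProduct]
    congr 1
    · exact Finset.sum_congr rfl fun j _ => by simp only [hy₀]; rw [mul_comm]
    · rw [hγ]; ring
  have hmemK : ∀ u ∈ D, ∀ r : ℝ, 0 < r → ((sumAx A u - b, g u - g x + r) : (Fin m → ℝ) × ℝ) ∈ K :=
    fun u hu r hr => ⟨u, hu, r, hr, rfl⟩
  have hineq : ∀ u ∈ D, ∀ r : ℝ, 0 < r →
      0 ≤ y₀ ⬝ᵥ (sumAx A u - b) + γ * (g u - g x + r) := by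
    intro u hu r hr
    have := hφ1 _ (hmemK u hu r hr)
    rwa [hdec] at this
  have hγ0 : 0 ≤ γ := by
    have h := hineq x hxD 1 one_pos
    rw [hAx] at h
    simpa using h
  have hγpos : 0 < γ := by
    rcases hγ0.lt_or_eq with h | h
    · exact h
    exfalso
    obtain ⟨u₁, hu₁, r₁, hr₁, rfl⟩ := hkk
    have hkkval : 0 < y₀ ⬝ᵥ (sumAx A u₁ - b) := by
      have h2 := hkkpos
      rw [hdec, ← h, zero_mul, add_zero] at h2
      exact h2
    obtain ⟨ε, hε, hmem⟩ := ri_extend _ x₀ u₁ hx₀ri hu₁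
    have hval := hineq _ hmem 1 one_pos
    rw [← h, zero_mul, add_zero] at hval
    have hcomp : sumAx A (x₀ + ε • (x₀ - u₁)) - b = (-ε) • (sumAx A u₁ - b) := by
      have hrw : x₀ + ε • (x₀ - u₁) = (1+ε) • x₀ + (-ε) • u₁ := by module
      rw [hrw, hsum_comb, hAx₀]
      funext j
      simp only [Pi.add_apply, Pi.sub_apply, Pi.smul_apply, smul_eq_mul]
      ring
    rw [hcomp, dotProduct_smul, smul_eq_mul] at hval
    nlinarith
  set y : Fin m → ℝ := γ⁻¹ • y₀ with hy
  have hKI : ∀ u ∈ D, g x ≤ g u + y ⬝ᵥ (sumAx A u - b) := by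
    intro u hu
    have h1 : 0 ≤ y₀ ⬝ᵥ (sumAx A u - b) + γ * (g u - g x) := by
      by_contra hneg
      push_neg at hneg
      set e : ℝ := y₀ ⬝ᵥ (sumAx A u - b) + γ * (g u - g x) with he
      have hr : 0 < -e / (2*γ) := div_pos (by linarith) (by linarith)
      have h2 := hineq u hu _ hr
      have h3 : γ * (g u - g x + (-e/(2*γ))) = γ * (g u - g x) + -e/2 := by
        field_simp
      rw [h3] at h2
      linarith
    have h4 : y ⬝ᵥ (sumAx A u - b) = γ⁻¹ * (y₀ ⬝ᵥ (sumAx A u - b)) := by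
      rw [hy, smul_dotProduct, smul_eq_mul]
    have h5 : γ⁻¹ * (y₀ ⬝ᵥ (sumAx A u - b) + γ * (g u - g x))
        = y ⬝ᵥ (sumAx A u - b) + (g u - g x) := by
      rw [mul_add, ← mul_assoc, inv_mul_cancel₀ hγpos.ne', one_mul, h4]
    have h6 := mul_nonneg (inv_pos.2 hγpos).le h1
    rw [h5] at h6
    linarith
  refine ⟨y, fun i => hblkt x hxD i, ?_⟩
  intro i v
  rcases eq_or_ne (f i v) ⊤ with htop | hne
  · rw [htop]; exact le_top
  have hbot : f i v ≠ ⊥ := (hf i).2.1 v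
  set upd : XIdx n → ℝ :=
    fun p => if h : p.1 = i then v (Fin.cast (congrArg n h) p.2) else x p with hupd
  have hblkupd_i : blk upd i = v := by
    funext j
    simp [blk, hupd]
  have hblkupd_ne : ∀ i', i' ≠ i → blk upd i' = blk x i' := by
    intro i' hne'
    funext j
    simp [blk, hupd, hne']
  have hupdD : upd ∈ D := by
    simp only [hD, Set.mem_setOf_eq]
    have hrep : objSum f upd = ((∑ i', (f i' (blk upd i')).toReal : ℝ) : EReal) := by
      refine ereal_sum_eq_coe _ _ (fun i' _ => hfb upd i') (fun i' _ => ?_)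
      by_cases h : i' = i
      · subst h; rw [hblkupd_i]; exact hne
      · rw [hblkupd_ne i' h]; exact hblkt x hxD i'
    rw [hrep]
    exact EReal.coe_ne_top _
  have hgupd : g upd - g x = (f i v).toReal - (f i (blk x i)).toReal := by
    simp only [hg]
    rw [← Finset.sum_sub_distrib, Finset.sum_eq_single i]
    · rw [hblkupd_i]
    · intro i' _ hne'; rw [hblkupd_ne i' hne', sub_self]
    · intro h; exact absurd (Finset.mem_univ i) h
  have hsumupd : sumAx A upd - b = (A i).mulVec (v - blk x i) := by
    rw [← hAx]
    unfold sumAx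
    rw [← Finset.sum_sub_distrib, Finset.sum_eq_single i]
    · rw [hblkupd_i, Matrix.mulVec_sub]
    · intro i' _ hne'; rw [hblkupd_ne i' hne', sub_self]
    · intro h; exact absurd (Finset.mem_univ i) h
  have hKIu := hKI upd hupdD
  rw [hsumupd] at hKIu
  have hwd : ((A i)ᵀ.mulVec y) ⬝ᵥ (v - blk x i) = y ⬝ᵥ (A i).mulVec (v - blk x i) := by
    rw [Matrix.mulVec_transpose, Matrix.dotProduct_mulVec]
  have hreal : (f i (blk x i)).toReal - ((A i)ᵀ.mulVec y) ⬝ᵥ (v - blk x i) ≤ (f i v).toReal := by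
    rw [hwd]; linarith
  calc (((f i (blk x i)).toReal - (((A i)ᵀ.mulVec y) ⬝ᵥ (v - blk x i)) : ℝ) : EReal)
      ≤ (((f i v).toReal : ℝ) : EReal) := EReal.coe_le_coe_iff.2 hreal
    _ = f i v := EReal.coe_toReal hne hbot

/-- If `x` solves (P) and `b ∈ A(ri(dom ∑ f_i))`, then for all `β > 0` and
`α_i > 0` there is `y` with `x_i = prox_{(α_i/β)f_i}(x_i − (α_i/β)A_iᵀy)` for all `i` and
`y = prox_{β ι_C*}(y + β ∑ A_i x_i)`. -/
theorem solution_implies_fixed_point {s m : ℕ} {n : Fin s → ℕ}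
    (f : ∀ i : Fin s, (Fin (n i) → ℝ) → EReal)
    (A : ∀ i : Fin s, Matrix (Fin m) (Fin (n i)) ℝ) (b : Fin m → ℝ)
    (hf : ∀ i, ProperConvexLsc (f i))
    (hb : RiCond f A b)
    (x : XIdx n → ℝ) (hx : IsSolution f A b x) :
    ∀ β : ℝ, 0 < β → ∀ α : Fin s → ℝ, (∀ i, 0 < α i) →
      ∃ y : Fin m → ℝ,
        (∀ i, IsProx (smulF (α i / β) (f i)) 1
          (blk x i - (α i / β) • (A i)ᵀ.mulVec y) (blk x i)) ∧
        IsProx (smulF β (iotaCstar b)) 1 (y + β • sumAx A x) y := by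
  intro β hβ α hα
  obtain ⟨y, hfin, hsub⟩ := exists_multiplier f A b hf hb x hx
  obtain ⟨hAx, -⟩ := hx
  refine ⟨y, fun i => ?_, ?_⟩
  · exact isProx_of_subgrad (f i) (α i / β) (div_pos (hα i) hβ) (blk x i)
      ((A i)ᵀ.mulVec y) ((f i (blk x i)).toReal)
      (EReal.coe_toReal (hfin i) ((hf i).2.1 _)).symm (hsub i)
  · have hkey : IsProx (smulF β (iotaCstar b)) 1 (y - β • (-b)) y := by
      refine isProx_of_subgrad (iotaCstar b) β hβ y (-b) (y ⬝ᵥ b) rfl fun v => ?_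
      refine le_of_eq ?_
      show (((y ⬝ᵥ b - ((-b) ⬝ᵥ (v - y))) : ℝ) : EReal) = ((v ⬝ᵥ b : ℝ) : EReal)
      rw [EReal.coe_eq_coe_iff]
      rw [neg_dotProduct, dotProduct_sub, dotProduct_comm b v,
        dotProduct_comm b y]
      ring
    have heq : y - β • (-b) = y + β • sumAx A x := by
      rw [hAx, smul_neg, sub_neg_eq_add]
    rwa [heq] at hkey

end
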